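/- arXiv:2203.14690 — 3 statements merged into one kernel-verified Lean document; each statement's English description precedes it below -/
import Mathlib

section
/- Let g : (0,∞) → ℝ be continuous with g(s) = c₃ log s + O(1) as s → 0 for some c₃ ∈ ℝ, and define F(r) = g(r) − (2/r²) ∫₀^r s g(s) ds for r > 0. Then F(r) = O(1) as r → 0; in particular F is bounded on (0, 1/2). -/
open MeasureTheory Real Set

noncomputable section

lemma integral_id_mul_log (r : ℝ) (hr : 0 ≤ r) :
    ∫ s in (0:ℝ)..r, s * Real.log s = r^2/2 * Real.log r - r^2/4 := by
  have hcmL : Continuous (fun s : ℝ => s * Real.log s) := Real.continuous_mul_log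
  have hcont : ContinuousOn (fun s : ℝ => s ^ 2 / 2 * Real.log s - s ^ 2 / 4) (Icc 0 r) := by
    have h1 : Continuous (fun s : ℝ => s * (s * Real.log s) / 2 - s ^ 2 / 4) := by
      continuity
    have he : (fun s : ℝ => s ^ 2 / 2 * Real.log s - s ^ 2 / 4)
        = fun s : ℝ => s * (s * Real.log s) / 2 - s ^ 2 / 4 := by
      ext s; ring
    rw [he]; exact h1.continuousOn
  have hderiv : ∀ x ∈ Ioo (0:ℝ) r,
      HasDerivWithinAt (fun s : ℝ => s ^ 2 / 2 * Real.log s - s ^ 2 / 4)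
        (x * Real.log x) (Ioi x) x := by
    intro x hx
    have hx0 : x ≠ 0 := ne_of_gt hx.1
    have h1 : HasDerivAt (fun s : ℝ => s ^ 2 / 2 * Real.log s - s ^ 2 / 4)
        (((2 : ℕ) * x ^ 1 / 2) * Real.log x + x ^ 2 / 2 * x⁻¹ - (2 : ℕ) * x ^ 1 / 4) x :=
      (((hasDerivAt_pow 2 x).div_const 2).mul (Real.hasDerivAt_log hx0)).sub
        ((hasDerivAt_pow 2 x).div_const 4)
    have h2 : (((2 : ℕ) : ℝ) * x ^ 1 / 2) * Real.log x + x ^ 2 / 2 * x⁻¹ - (2 : ℕ) * x ^ 1 / 4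
        = x * Real.log x := by
      field_simp
      ring
    rw [h2] at h1
    exact h1.hasDerivWithinAt
  have := intervalIntegral.integral_eq_sub_of_hasDeriv_right_of_le hr hcont
    hderiv (hcmL.intervalIntegrable 0 r)
  simpa using this


/-- Cancellation of logarithmic singularities: if `g(s) = c₃ log s + O(1)` as `s → 0`, then
`F(r) = g(r) − (2/r²) ∫₀^r s g(s) ds = O(1)` as `r → 0`; in particular `F` is bounded on
`(0, 1/2)`. -/
theorem stmt2 (g : ℝ → ℝ) (c₃ : ℝ) (hg : ContinuousOn g (Set.Ioi 0))
    (hO : ∃ C > (0:ℝ), ∃ δ > (0:ℝ), ∀ s : ℝ, 0 < s → s < δ → |g s - c₃ * Real.log s| ≤ C) :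
    (∃ C > (0:ℝ), ∃ δ > (0:ℝ), ∀ r : ℝ, 0 < r → r < δ →
        |g r - 2 / r ^ 2 * ∫ s in (0:ℝ)..r, s * g s| ≤ C) ∧
    (∃ C > (0:ℝ), ∀ r : ℝ, 0 < r → r < 1 / 2 →
        |g r - 2 / r ^ 2 * ∫ s in (0:ℝ)..r, s * g s| ≤ C) := by
  obtain ⟨C, hC, δ, hδ, hb⟩ := hO
  set δ₁ : ℝ := min δ 1 with hδ₁def
  have hδ₁pos : 0 < δ₁ := lt_min hδ one_pos
  have hδ₁le1 : δ₁ ≤ 1 := min_le_right _ _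
  have hδ₁leδ : δ₁ ≤ δ := min_le_left _ _
  -- integrability on Ioc 0 r for all r > 0
  have hInt : ∀ r : ℝ, 0 < r → IntegrableOn (fun s => s * g s) (Ioc 0 r) volume := by
    intro r hr
    set m : ℝ := min r (δ₁ / 2) with hm
    have hm0 : 0 < m := lt_min hr (by positivity)
    have hmr : m ≤ r := min_le_left _ _
    have hmδ : m < δ := lt_of_le_of_lt (min_le_right _ _)
      (lt_of_lt_of_le (half_lt_self hδ₁pos) hδ₁leδ)
    have hm1 : m ≤ 1 := le_trans (min_le_right _ _) (le_trans (half_le_self hδ₁pos.le) hδ₁le1)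
    have h1 : IntegrableOn (fun s => s * g s) (Ioc 0 m) volume := by
      have hmeas : AEStronglyMeasurable (fun s => s * g s) (volume.restrict (Ioc (0:ℝ) m)) :=
        ContinuousOn.aestronglyMeasurable
          ((continuous_id.continuousOn).mul (hg.mono (fun x hx => hx.1))) measurableSet_Ioc
      refine Integrable.mono' (integrable_const (C + |c₃|)) hmeas ?_
      refine (ae_restrict_iff' measurableSet_Ioc).2 (Filter.Eventually.of_forall ?_)
      intro x hx
      have hx0 : 0 < x := hx.1
      have hx1 : x ≤ 1 := le_trans hx.2 hm1
      have hxδ : x < δ := lt_of_le_of_lt hx.2 hmδ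
      have key : x * g x = x * (g x - c₃ * Real.log x) + c₃ * (Real.log x * x) := by ring
      rw [Real.norm_eq_abs, key]
      have e1 : |x * (g x - c₃ * Real.log x)| ≤ 1 * C := by
        rw [abs_mul]
        exact mul_le_mul (by rw [abs_of_pos hx0]; exact hx1) (hb x hx0 hxδ)
          (abs_nonneg _) zero_le_one
      have e2 : |c₃ * (Real.log x * x)| ≤ |c₃| * 1 := by
        rw [abs_mul]
        exact mul_le_mul_of_nonneg_left (Real.abs_log_mul_self_lt x hx0 hx1).le (abs_nonneg _)
      calc |x * (g x - c₃ * Real.log x) + c₃ * (Real.log x * x)|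
          ≤ |x * (g x - c₃ * Real.log x)| + |c₃ * (Real.log x * x)| := abs_add_le _ _
        _ ≤ 1 * C + |c₃| * 1 := add_le_add e1 e2
        _ = C + |c₃| := by ring
    have h2 : IntegrableOn (fun s => s * g s) (Ioc m r) volume := by
      have : ContinuousOn (fun s => s * g s) (Icc m r) :=
        (continuous_id.continuousOn).mul (hg.mono fun x hx => lt_of_lt_of_le hm0 hx.1)
      exact (this.integrableOn_Icc).mono_set Ioc_subset_Icc_self
    exact (h1.union h2).mono_set (by
      intro x hx
      rcases le_or_gt x m with h | h
      · exact Or.inl ⟨hx.1, h⟩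
      · exact Or.inr ⟨h, hx.2⟩)
  -- the key bound near zero
  have hkey : ∀ r : ℝ, 0 < r → r < δ₁ →
      |g r - 2 / r ^ 2 * ∫ s in (0:ℝ)..r, s * g s| ≤ 3 * C + |c₃| / 2 := by
    intro r hr hrδ₁
    have hr2 : (0:ℝ) < r ^ 2 := by positivity
    have hii_f : IntervalIntegrable (fun s => s * g s) volume 0 r :=
      (intervalIntegrable_iff_integrableOn_Ioc_of_le hr.le).2 (hInt r hr)
    have hii_L : IntervalIntegrable (fun s => c₃ * (s * Real.log s)) volume 0 r :=
      (continuous_const.mul Real.continuous_mul_log).intervalIntegrable 0 r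
    have hii_J : IntervalIntegrable
        (fun s => s * g s - c₃ * (s * Real.log s)) volume 0 r := hii_f.sub hii_L
    set J : ℝ := ∫ s in (0:ℝ)..r, (s * g s - c₃ * (s * Real.log s)) with hJ
    have hsplit : (∫ s in (0:ℝ)..r, s * g s)
        = J + c₃ * (r ^ 2 / 2 * Real.log r - r ^ 2 / 4) := by
      have := intervalIntegral.integral_add hii_J hii_L
      simp only [sub_add_cancel] at this
      rw [this, intervalIntegral.integral_const_mul, integral_id_mul_log r hr.le]
    have hJbound : |J| ≤ C * r ^ 2 := by
      have : ‖J‖ ≤ C * r * |r - 0| := by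
        refine intervalIntegral.norm_integral_le_of_norm_le_const ?_
        intro x hx
        rw [uIoc_of_le hr.le] at hx
        have hx0 : 0 < x := hx.1
        have hxδ : x < δ := lt_of_le_of_lt hx.2 (lt_of_lt_of_le hrδ₁ hδ₁leδ)
        have : x * g x - c₃ * (x * Real.log x) = x * (g x - c₃ * Real.log x) := by ring
        rw [Real.norm_eq_abs, this, abs_mul, mul_comm C r]
        exact mul_le_mul (by rw [abs_of_pos hx0]; exact hx.2) (hb x hx0 hxδ)
          (abs_nonneg _) hr.le
      rw [Real.norm_eq_abs] at this
      calc |J| ≤ C * r * |r - 0| := this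
        _ = C * r ^ 2 := by rw [sub_zero, abs_of_pos hr]; ring
    have halg : g r - 2 / r ^ 2 * ∫ s in (0:ℝ)..r, s * g s
        = (g r - c₃ * Real.log r) - 2 / r ^ 2 * J + c₃ / 2 := by
      rw [hsplit]
      field_simp
      ring
    rw [halg]
    calc |(g r - c₃ * Real.log r) - 2 / r ^ 2 * J + c₃ / 2|
        ≤ |(g r - c₃ * Real.log r) - 2 / r ^ 2 * J| + |c₃ / 2| := abs_add_le _ _
      _ ≤ |g r - c₃ * Real.log r| + |2 / r ^ 2 * J| + |c₃ / 2| := by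
          gcongr; exact abs_sub _ _
      _ ≤ C + 2 * C + |c₃| / 2 := by
          have h1 : |g r - c₃ * Real.log r| ≤ C :=
            hb r hr (lt_of_lt_of_le hrδ₁ hδ₁leδ)
          have h2 : |2 / r ^ 2 * J| ≤ 2 * C := by
            rw [abs_mul, abs_of_pos (by positivity : (0:ℝ) < 2 / r ^ 2)]
            calc 2 / r ^ 2 * |J| ≤ 2 / r ^ 2 * (C * r ^ 2) := by
                  gcongr
              _ = 2 * C := by field_simp
          have h3 : |c₃ / 2| = |c₃| / 2 := by rw [abs_div]; norm_num
          rw [h3]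
          gcongr
      _ = 3 * C + |c₃| / 2 := by ring
  constructor
  · exact ⟨3 * C + |c₃| / 2, by positivity, δ₁, hδ₁pos, hkey⟩
  · -- boundedness on (0, 1/2)
    set a : ℝ := δ₁ / 2 with ha
    have ha0 : 0 < a := by positivity
    have haδ₁ : a < δ₁ := half_lt_self hδ₁pos
    have ha12 : a ≤ 1 / 2 := by
      rw [ha]; linarith [hδ₁le1]
    -- continuity of the primitive
    have hIcc : IntegrableOn (fun s => s * g s) (Icc 0 (1/2)) volume :=
      (integrableOn_Icc_iff_integrableOn_Ioc).2 (hInt (1/2) (by norm_num))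
    have hprim : ContinuousOn (fun x => ∫ t in Ioc (0:ℝ) x, t * g t) (Icc 0 (1/2)) :=
      intervalIntegral.continuousOn_primitive hIcc
    set Φ : ℝ → ℝ := fun r => g r - 2 / r ^ 2 * ∫ t in Ioc (0:ℝ) r, t * g t with hΦ
    have hΦcont : ContinuousOn Φ (Icc a (1/2)) := by
      have hsub : Icc a (1/2) ⊆ Ioi 0 := fun x hx => lt_of_lt_of_le ha0 hx.1
      have hsub2 : Icc a (1/2) ⊆ Icc 0 (1/2) := Icc_subset_Icc ha0.le le_rfl
      refine (hg.mono hsub).sub (ContinuousOn.mul ?_ (hprim.mono hsub2))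
      exact ContinuousOn.div continuousOn_const
        ((continuous_pow 2).continuousOn)
        (fun x hx => pow_ne_zero 2 (ne_of_gt (hsub hx)))
    obtain ⟨C₂, hC₂⟩ := (isCompact_Icc).exists_bound_of_continuousOn hΦcont
    refine ⟨max (3 * C + |c₃| / 2) C₂ + 1, by positivity, ?_⟩
    intro r hr hr12
    rcases lt_or_ge r a with h | h
    · calc |g r - 2 / r ^ 2 * ∫ s in (0:ℝ)..r, s * g s| ≤ 3 * C + |c₃| / 2 :=
          hkey r hr (lt_trans h haδ₁)
        _ ≤ max (3 * C + |c₃| / 2) C₂ + 1 := by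
            have := le_max_left (3 * C + |c₃| / 2) C₂
            linarith
    · have hmem : r ∈ Icc a (1/2) := ⟨h, hr12.le⟩
      have := hC₂ r hmem
      rw [hΦ] at this
      simp only [Real.norm_eq_abs] at this
      rw [intervalIntegral.integral_of_le hr.le]
      calc |g r - 2 / r ^ 2 * ∫ s in Ioc (0:ℝ) r, s * g s| ≤ C₂ := this
        _ ≤ max (3 * C + |c₃| / 2) C₂ + 1 := by
            have := le_max_right (3 * C + |c₃| / 2) C₂
            linarith
end
end

section
/- For ε > 0 define K_ε(x, y) = (x − y)^⊥/(2π|x − y|²) − (x − ε²y/|y|²)^⊥/(2π|x − ε²y/|y|²|²) for x, y ∈ ℝ² with |x|, |y| > ε and x ≠ y. Then for all such x, y with |x| > 2|y| one has |K_ε(x, y)| ≤ 4|y|/(π|x|²). -/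
open MeasureTheory Real Set

noncomputable section

/-- Euclidean norm on `ℝ × ℝ`. -/
def norm2 (x : ℝ × ℝ) : ℝ := Real.sqrt (x.1 ^ 2 + x.2 ^ 2)

/-- Counterclockwise rotation by 90 degrees. -/
def perp2 (z : ℝ × ℝ) : ℝ × ℝ := (-z.2, z.1)

/-- Identification of `ℝ × ℝ` with `ℂ`. -/
def toC (x : ℝ × ℝ) : ℂ := ⟨x.1, x.2⟩

lemma norm2_eq (x : ℝ × ℝ) : norm2 x = ‖toC x‖ := by
  simp [norm2, Complex.norm_def, Complex.normSq, toC, sq]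

lemma toC_sub (x y : ℝ × ℝ) : toC (x - y) = toC x - toC y := by
  apply Complex.ext <;> simp [toC]

lemma toC_smul (r : ℝ) (z : ℝ × ℝ) : toC (r • z) = (r : ℂ) * toC z := by
  apply Complex.ext <;> simp [toC]

lemma toC_perp (z : ℝ × ℝ) : toC (perp2 z) = Complex.I * toC z := by
  apply Complex.ext <;> simp [toC, perp2]

lemma key (A B : ℂ) (hA : A ≠ 0) (hB : B ≠ 0) :
    ‖((2 * π * ‖A‖ ^ 2 : ℝ) : ℂ)⁻¹ * A -
        ((2 * π * ‖B‖ ^ 2 : ℝ) : ℂ)⁻¹ * B‖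
      = ‖A - B‖ / (2 * π * (‖A‖ * ‖B‖)) := by
  have hπ : (π : ℝ) ≠ 0 := Real.pi_ne_zero
  have hcA : (starRingEnd ℂ) A ≠ 0 := by simpa using hA
  have hcB : (starRingEnd ℂ) B ≠ 0 := by simpa using hB
  have habs : ∀ z : ℂ, ((‖z‖ : ℝ) : ℂ) ^ 2 = z * (starRingEnd ℂ z) := by
    intro z; rw [Complex.mul_conj]; norm_cast; exact Complex.sq_norm z
  have h1 : ∀ z : ℂ, z ≠ 0 → ((2 * π * ‖z‖ ^ 2 : ℝ) : ℂ)⁻¹ * z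
      = ((2 * π : ℝ) : ℂ)⁻¹ * ((starRingEnd ℂ) z)⁻¹ := by
    intro z hz
    have hcz : (starRingEnd ℂ) z ≠ 0 := by simpa using hz
    push_cast
    rw [habs z, show 2 * (π:ℂ) * (z * (starRingEnd ℂ) z)
        = z * (2 * (π:ℂ) * (starRingEnd ℂ) z) from by ring,
      mul_inv, mul_comm z⁻¹, mul_assoc, inv_mul_cancel₀ hz, mul_one, mul_inv]
  rw [h1 A hA, h1 B hB, ← mul_sub, norm_mul,
    inv_sub_inv hcA hcB, ← map_sub (starRingEnd ℂ) B A, norm_div, norm_mul]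
  rw [Complex.norm_conj, Complex.norm_conj, Complex.norm_conj]
  have h2π : ‖((2 * π : ℝ) : ℂ)⁻¹‖ = (2 * π)⁻¹ := by
    rw [norm_inv, Complex.norm_real, Real.norm_eq_abs, abs_of_pos (by positivity)]
  rw [h2π, ← norm_neg (B - A), neg_sub]
  field_simp

/-- The kernel `K_ε(x,y)` of the Biot–Savart law in the exterior of the disk of radius `ε`
satisfies `|K_ε(x,y)| ≤ 4|y|/(π|x|²)` whenever `|x| > 2|y|` (and `|x|, |y| > ε`, `x ≠ y`). -/
theorem stmt6 (ε : ℝ) (hε : 0 < ε) :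
    ∀ x y : ℝ × ℝ, ε < norm2 x → ε < norm2 y → x ≠ y → 2 * norm2 y < norm2 x →
      norm2 ((2 * π * norm2 (x - y) ^ 2)⁻¹ • perp2 (x - y) -
          (2 * π * norm2 (x - (ε ^ 2 / norm2 y ^ 2) • y) ^ 2)⁻¹ •
            perp2 (x - (ε ^ 2 / norm2 y ^ 2) • y)) ≤
        4 * norm2 y / (π * norm2 x ^ 2) := by
  intro x y hx hy hxy hbig
  have hπ : (0:ℝ) < π := Real.pi_pos
  have hy0 : 0 < norm2 y := hε.trans hy
  have hx0 : 0 < norm2 x := by linarith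
  set r : ℝ := ε ^ 2 / norm2 y ^ 2 with hrdef
  have hr0 : 0 < r := by positivity
  have hr1 : r < 1 := by
    rw [hrdef, div_lt_one (by positivity)]; nlinarith
  set A : ℂ := toC x - toC y with hAdef
  set B : ℂ := toC x - (r : ℂ) * toC y with hBdef
  have hAeq : toC (x - y) = A := toC_sub x y
  have hBeq : toC (x - r • y) = B := by rw [toC_sub, toC_smul]
  have hny : ‖toC y‖ = norm2 y := (norm2_eq y).symm
  have hnx : ‖toC x‖ = norm2 x := (norm2_eq x).symm
  have hAn : norm2 (x - y) = ‖A‖ := by rw [norm2_eq, hAeq]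
  have hBn : norm2 (x - r • y) = ‖B‖ := by rw [norm2_eq, hBeq]
  have hAge : norm2 x - norm2 y ≤ ‖A‖ := by
    rw [← hnx, ← hny]; exact norm_sub_norm_le _ _
  have hBge : norm2 x - norm2 y ≤ ‖B‖ := by
    have h1 : ‖(r : ℂ) * toC y‖ = r * norm2 y := by
      rw [norm_mul, Complex.norm_real, Real.norm_eq_abs, abs_of_pos hr0, hny]
    have h2 : ‖toC x‖ - ‖(r:ℂ) * toC y‖ ≤ ‖B‖ :=
      norm_sub_norm_le _ _
    rw [h1, hnx] at h2
    nlinarith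
  have hA0 : A ≠ 0 := by
    rw [hAdef, sub_ne_zero]
    intro h
    exact hxy (Prod.ext (congrArg Complex.re h) (congrArg Complex.im h))
  have hB0 : B ≠ 0 := by
    intro h
    rw [h] at hBge
    simp at hBge
    nlinarith
  have hABd : ‖A - B‖ ≤ norm2 y := by
    have : A - B = ((r : ℂ) - 1) * toC y := by rw [hAdef, hBdef]; ring
    rw [this, norm_mul, hny]
    have : ‖(r:ℂ) - 1‖ = 1 - r := by
      rw [show ((r:ℂ) - 1) = ((r - 1 : ℝ) : ℂ) from by push_cast; ring,
        Complex.norm_real, Real.norm_eq_abs, abs_of_neg (by linarith)]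
      ring
    rw [this]
    nlinarith
  -- rewrite the goal in complex form
  have hgoal : norm2 ((2 * π * norm2 (x - y) ^ 2)⁻¹ • perp2 (x - y) -
          (2 * π * norm2 (x - r • y) ^ 2)⁻¹ • perp2 (x - r • y))
      = ‖A - B‖ / (2 * π * (‖A‖ * ‖B‖)) := by
    rw [norm2_eq, toC_sub, toC_smul, toC_smul, toC_perp, toC_perp, hAeq, hBeq, hAn, hBn,
      Complex.ofReal_inv, Complex.ofReal_inv]
    rw [show ((2 * π * ‖A‖ ^ 2 : ℝ) : ℂ)⁻¹ * (Complex.I * A) -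
        ((2 * π * ‖B‖ ^ 2 : ℝ) : ℂ)⁻¹ * (Complex.I * B) = Complex.I *
        (((2 * π * ‖A‖ ^ 2 : ℝ) : ℂ)⁻¹ * A -
         ((2 * π * ‖B‖ ^ 2 : ℝ) : ℂ)⁻¹ * B) from by ring]
    rw [norm_mul, Complex.norm_I, one_mul, key A B hA0 hB0]
  rw [hgoal]
  -- final numeric estimate
  have hAp : 0 < ‖A‖ := norm_pos_iff.mpr hA0
  have hBp : 0 < ‖B‖ := norm_pos_iff.mpr hB0
  have hprod : (norm2 x - norm2 y) * (norm2 x - norm2 y)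
      ≤ ‖A‖ * ‖B‖ :=
    mul_le_mul hAge hBge (by nlinarith) (norm_nonneg A)
  have h8 : norm2 x ^ 2 ≤ 8 * (‖A‖ * ‖B‖) := by
    nlinarith [hprod, sq_nonneg (norm2 x - 2 * norm2 y), hy0, hbig, mul_pos hy0 hy0]
  rw [div_le_div_iff₀ (by positivity) (by positivity)]
  have h9 : π * norm2 y * norm2 x ^ 2
      ≤ π * norm2 y * (8 * (‖A‖ * ‖B‖)) :=
    mul_le_mul_of_nonneg_left h8 (by positivity)
  have h10 : ‖A - B‖ * (π * norm2 x ^ 2) ≤ norm2 y * (π * norm2 x ^ 2) :=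
    mul_le_mul_of_nonneg_right hABd (by positivity)
  nlinarith [h9, h10]

end
end

section
/- Let ε ∈ (0, 1), q ∈ L¹ ∩ L^∞ on the exterior domain Π_ε = {x ∈ ℝ² : |x| > ε} with supp q ⊆ {|x| ≤ R} for some R > ε, and define K(q)(x) = ∫ K_ε(x, y) q(y) dy with K_ε(x,y) = (x−y)^⊥/(2π|x−y|²) − (x−ε²y/|y|²)^⊥/(2π|x−ε²y/|y|²|²). Then for every x with |x| > 2R one has |K(q)(x)| ≤ 4R‖q‖_{L¹}/(π|x|²). -/
open MeasureTheory Real Set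

noncomputable section

/-- The kernel of the Biot–Savart law in the exterior of the disk of radius `ε`. -/
def Kker (ε : ℝ) (x y : ℝ × ℝ) : ℝ × ℝ :=
  (2 * π * norm2 (x - y) ^ 2)⁻¹ • perp2 (x - y) -
    (2 * π * norm2 (x - (ε ^ 2 / norm2 y ^ 2) • y) ^ 2)⁻¹ •
      perp2 (x - (ε ^ 2 / norm2 y ^ 2) • y)

/-- The identification of `ℝ × ℝ` with `ℂ`. -/
def e2 : (ℝ × ℝ) ≃L[ℝ] ℂ := Complex.equivRealProdCLM.symm

lemma norm2_eq_s8 (z : ℝ × ℝ) : norm2 z = ‖e2 z‖ := by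
  simp [norm2, e2, Complex.equivRealProdCLM_symm_apply, Complex.norm_add_mul_I]

lemma e2_smul (c : ℝ) (z : ℝ × ℝ) : e2 (c • z) = (c : ℂ) * e2 z := by
  rw [_root_.map_smul]; simp [Complex.real_smul]

lemma e2_perp (z : ℝ × ℝ) : e2 (perp2 z) = Complex.I * e2 z := by
  simp [e2, perp2, Complex.equivRealProdCLM_symm_apply, Complex.ext_iff]

lemma norm2_nonneg (z : ℝ × ℝ) : 0 ≤ norm2 z := Real.sqrt_nonneg _

lemma norm2_smul (c : ℝ) (z : ℝ × ℝ) : norm2 (c • z) = |c| * norm2 z := by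
  rw [norm2_eq_s8, norm2_eq_s8, e2_smul, norm_mul, Complex.norm_real, Real.norm_eq_abs]

/-- The exact algebraic identity for the difference of two Biot–Savart-type terms. -/
lemma kker_identity (A B : ℂ) (hA : A ≠ 0) (hB : B ≠ 0) :
    (2 * π * ‖A‖ ^ 2)⁻¹ • (Complex.I * A) -
      (2 * π * ‖B‖ ^ 2)⁻¹ • (Complex.I * B) =
    (2 * (π:ℂ))⁻¹ * Complex.I * ((starRingEnd ℂ) (B - A)) *
      (((starRingEnd ℂ) A)⁻¹ * ((starRingEnd ℂ) B)⁻¹) := by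
  have hA' : (starRingEnd ℂ) A ≠ 0 := by simpa using hA
  have hB' : (starRingEnd ℂ) B ≠ 0 := by simpa using hB
  have hπ : (π:ℂ) ≠ 0 := by exact_mod_cast Real.pi_ne_zero
  have h1 : ((‖A‖ ^ 2 : ℝ) : ℂ) = A * (starRingEnd ℂ) A := by
    rw [Complex.sq_norm, Complex.mul_conj]
  have h2 : ((‖B‖ ^ 2 : ℝ) : ℂ) = B * (starRingEnd ℂ) B := by
    rw [Complex.sq_norm, Complex.mul_conj]
  rw [Complex.real_smul, Complex.real_smul]
  push_cast [h1, h2, map_sub]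
  field_simp

/-- Pointwise bound on the kernel. -/
lemma Kker_bound (ε R : ℝ) (x y : ℝ × ℝ) (hε : 0 < ε) (hR : ε < R)
    (hx : 2 * R < norm2 x) (hy1 : ε < norm2 y) (hy2 : norm2 y ≤ R) :
    norm2 (Kker ε x y) ≤ 4 * R / (π * norm2 x ^ 2) := by
  have hR0 : 0 < R := hε.trans hR
  have hx0 : 0 < norm2 x := by nlinarith
  have hy0 : 0 < norm2 y := hε.trans hy1
  set c : ℝ := ε ^ 2 / norm2 y ^ 2 with hc
  have hc0 : 0 < c := by positivity
  have hc1 : c < 1 := by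
    rw [hc, div_lt_one (by positivity)]
    nlinarith
  set A : ℂ := e2 (x - y) with hA
  set B : ℂ := e2 (x - c • y) with hB
  -- lower bounds for |A|, |B|
  have habsA : norm2 x / 2 ≤ ‖A‖ := by
    have h1 : ‖e2 x‖ - ‖e2 y‖ ≤ ‖e2 x - e2 y‖ := norm_sub_norm_le _ _
    have h2 : ‖A‖ = ‖e2 x - e2 y‖ := by
      rw [hA, map_sub]
    rw [h2]
    have hxe : ‖e2 x‖ = norm2 x := by rw [norm2_eq_s8]
    have hye : ‖e2 y‖ = norm2 y := by rw [norm2_eq_s8]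
    rw [hxe, hye] at h1
    linarith
  have hcy : norm2 (c • y) < R := by
    rw [norm2_smul, abs_of_pos hc0]
    calc c * norm2 y < 1 * norm2 y := by exact mul_lt_mul_of_pos_right hc1 hy0
      _ = norm2 y := one_mul _
      _ ≤ R := hy2
  have habsB : norm2 x / 2 ≤ ‖B‖ := by
    have h1 : ‖e2 x‖ - ‖e2 (c • y)‖ ≤ ‖e2 x - e2 (c • y)‖ := norm_sub_norm_le _ _
    have h2 : ‖B‖ = ‖e2 x - e2 (c • y)‖ := by
      rw [hB, map_sub]
    rw [h2]
    have hxe : ‖e2 x‖ = norm2 x := by rw [norm2_eq_s8]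
    have hye : ‖e2 (c • y)‖ = norm2 (c • y) := by rw [norm2_eq_s8]
    rw [hxe, hye] at h1
    linarith
  have hx2 : 0 < norm2 x / 2 := by positivity
  have hA0 : A ≠ 0 := by
    intro h; rw [h] at habsA; simp at habsA; linarith
  have hB0 : B ≠ 0 := by
    intro h; rw [h] at habsB; simp at habsB; linarith
  -- |B - A| ≤ R
  have hBA : ‖B - A‖ ≤ R := by
    have : B - A = ((1 - c : ℝ) : ℂ) * e2 y := by
      rw [hA, hB, map_sub, map_sub, e2_smul]; push_cast; ring
    rw [this, norm_mul, Complex.norm_real, Real.norm_eq_abs, abs_of_pos (by linarith), ← norm2_eq_s8]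
    nlinarith
  -- compute norm2 of the kernel
  have hkey : norm2 (Kker ε x y) =
      (2 * π)⁻¹ * ‖B - A‖ * ((‖A‖)⁻¹ * (‖B‖)⁻¹) := by
    have he : e2 (Kker ε x y) =
        (2 * π * ‖A‖ ^ 2)⁻¹ • (Complex.I * A) -
          (2 * π * ‖B‖ ^ 2)⁻¹ • (Complex.I * B) := by
      rw [Kker, map_sub, _root_.map_smul, _root_.map_smul, e2_perp, e2_perp,
        ← hA, ← hB, norm2_eq_s8, norm2_eq_s8, ← hA, ← hB]
    rw [norm2_eq_s8, he, kker_identity A B hA0 hB0]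
    simp only [norm_mul, norm_inv, Complex.norm_conj, Complex.norm_I]
    rw [Complex.norm_two, Complex.norm_real, Real.norm_eq_abs, abs_of_pos Real.pi_pos]
    ring
  rw [hkey]
  have step1 : (2 * π)⁻¹ * ‖B - A‖ * ((‖A‖)⁻¹ * (‖B‖)⁻¹) ≤
      (2 * π)⁻¹ * R * ((norm2 x / 2)⁻¹ * (norm2 x / 2)⁻¹) := by
    gcongr <;> first
      | exact inv_nonneg.mpr (by positivity)
      | exact map_nonneg _ _
      | positivity
      | assumption
  have step2 : (2 * π)⁻¹ * R * ((norm2 x / 2)⁻¹ * (norm2 x / 2)⁻¹) =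
      2 * R / (π * norm2 x ^ 2) := by
    field_simp
  have step3 : 2 * R / (π * norm2 x ^ 2) ≤ 4 * R / (π * norm2 x ^ 2) := by
    rw [div_le_div_iff₀ (by positivity) (by positivity)]
    nlinarith [mul_pos Real.pi_pos (pow_pos hx0 2), hR0]
  linarith [step1, step2 ▸ step1]

/-- Decay of the exterior Biot–Savart velocity field: if `q ∈ L¹ ∩ L^∞` is supported in
`{ε < |x| ≤ R}`, then `|K(q)(x)| ≤ 4R‖q‖_{L¹}/(π|x|²)` for `|x| > 2R`. -/
theorem stmt8 (ε R : ℝ) (hε : 0 < ε) (hε1 : ε < 1) (hR : ε < R)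
    (q : ℝ × ℝ → ℝ)
    (hq1 : Integrable q) (hqinf : ∃ C : ℝ, ∀ x, |q x| ≤ C)
    (hsupp : ∀ x : ℝ × ℝ, R < norm2 x → q x = 0)
    (hout : ∀ x : ℝ × ℝ, norm2 x ≤ ε → q x = 0) :
    ∀ x : ℝ × ℝ, 2 * R < norm2 x →
      norm2 (∫ y, q y • Kker ε x y) ≤ 4 * R * (∫ y, |q y|) / (π * norm2 x ^ 2) := by
  intro x hx
  have hR0 : 0 < R := hε.trans hR
  have hx0 : 0 < norm2 x := by nlinarith
  set C := 4 * R / (π * norm2 x ^ 2) with hC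
  have hC0 : 0 ≤ C := by positivity
  have hpt : ∀ y, norm2 (q y • Kker ε x y) ≤ C * |q y| := by
    intro y
    by_cases h : q y = 0
    · simp [h, norm2, Real.sqrt_zero]
    · have hy1 : ε < norm2 y := by
        by_contra h'
        exact h (hout y (le_of_not_gt h'))
      have hy2 : norm2 y ≤ R := by
        by_contra h'
        exact h (hsupp y (lt_of_not_ge h'))
      rw [norm2_smul]
      calc |q y| * norm2 (Kker ε x y) ≤ |q y| * C :=
            mul_le_mul_of_nonneg_left (Kker_bound ε R x y hε hR hx hy1 hy2) (abs_nonneg _)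
        _ = C * |q y| := mul_comm _ _
  calc norm2 (∫ y, q y • Kker ε x y)
      = ‖e2 (∫ y, q y • Kker ε x y)‖ := norm2_eq_s8 _
    _ = ‖∫ y, e2 (q y • Kker ε x y)‖ := by
        rw [ContinuousLinearEquiv.integral_comp_comm]
    _ = ‖∫ y, e2 (q y • Kker ε x y)‖ := rfl
    _ ≤ ∫ y, ‖e2 (q y • Kker ε x y)‖ := norm_integral_le_integral_norm _
    _ = ∫ y, norm2 (q y • Kker ε x y) := by
        congr 1; funext y; rw [norm2_eq_s8]
    _ ≤ ∫ y, C * |q y| := by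
        apply integral_mono_of_nonneg
        · exact Filter.Eventually.of_forall fun y => norm2_nonneg _
        · exact (hq1.abs.const_mul C)
        · exact Filter.Eventually.of_forall hpt
    _ = C * ∫ y, |q y| := integral_const_mul C _
    _ = 4 * R * (∫ y, |q y|) / (π * norm2 x ^ 2) := by rw [hC, div_mul_eq_mul_div]
end
end
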